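/- The function φ(t) = (e^t − t − 1)/t² (extended by φ(0) = 1/2) satisfies φ(t) ≤ 1/(2−t) for all t with 0 ≤ t < 2. -/

import Mathlib

lemma key_deriv (x : ℝ) : HasDerivAt (fun x : ℝ => (2 + x) * Real.exp (-x) + x)
    (1 - (1 + x) * Real.exp (-x)) x := by
  have h1 : HasDerivAt (fun x : ℝ => Real.exp (-x)) (-Real.exp (-x)) x := by
    simpa [Function.comp_def] using (Real.hasDerivAt_exp (-x)).comp x (hasDerivAt_neg x)
  have h2 := ((hasDerivAt_const x (2:ℝ)).add (hasDerivAt_id x)).mul h1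
  have h3 := h2.add (hasDerivAt_id x)
  refine h3.congr_deriv ?_
  simp [id]
  ring

lemma key_ineq (t : ℝ) (ht : 0 ≤ t) : (2 - t) * Real.exp t ≤ 2 + t := by
  have hmono : MonotoneOn (fun x : ℝ => (2 + x) * Real.exp (-x) + x) (Set.Ici 0) := by
    apply monotoneOn_of_deriv_nonneg (convex_Ici 0)
    · fun_prop
    · intro x _
      exact (key_deriv x).differentiableAt.differentiableWithinAt
    · intro x hx
      rw [(key_deriv x).deriv]
      have hx0 : 0 ≤ x := le_of_lt (by simpa using hx)
      have h1 : 1 + x ≤ Real.exp x := by linarith [Real.add_one_le_exp x]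
      have hpos : 0 < Real.exp (-x) := Real.exp_pos _
      have hne : Real.exp (-x) * Real.exp x = 1 := by rw [← Real.exp_add]; simp
      nlinarith [mul_le_mul_of_nonneg_right h1 hpos.le]
  have := hmono (Set.mem_Ici.mpr le_rfl) (Set.mem_Ici.mpr ht) ht
  norm_num at this
  have hexp : 0 < Real.exp t := Real.exp_pos t
  have hne : Real.exp (-t) * Real.exp t = 1 := by rw [← Real.exp_add]; simp
  nlinarith [mul_le_mul_of_nonneg_right this hexp.le]

theorem stmt_1 (t : ℝ) (ht0 : 0 ≤ t) (ht2 : t < 2) :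
    (if t = 0 then (1 : ℝ) / 2 else (Real.exp t - t - 1) / t ^ 2) ≤ 1 / (2 - t) := by
  rcases eq_or_lt_of_le ht0 with h | h
  · simp [← h]
  · rw [if_neg (ne_of_gt h)]
    have ht2' : 0 < 2 - t := by linarith
    rw [div_le_div_iff₀ (by positivity) ht2']
    have := key_ineq t ht0
    nlinarith [this]
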